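/- Let k ≥ 1 and n ≥ 2 be integers, and let x_1,…,x_k > 0 be real numbers with x_1+…+x_k = (n choose 2). For each j let y_j > 0 be the real number with y_j(y_j − 1)/2 = x_j. Then (y_1 − 1) + … + (y_k − 1) ≤ (√(k² + 4kn² − 4kn) − k)/2 < √k · n, and the first inequality is an equality when all x_j are equal to (n choose 2)/k. -/

import Mathlib

set_option maxHeartbeats 1000000 in
/-- continuous relaxation bound (Lemma on convexity). -/
theorem convex_relaxation (k n : ℕ) (hk : 1 ≤ k) (hn : 2 ≤ n) (x y : Fin k → ℝ)
    (hx : ∀ j, 0 < x j) (hsum : ∑ j, x j = (Nat.choose n 2 : ℝ))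
    (hy : ∀ j, 0 < y j ∧ y j * (y j - 1) / 2 = x j) :
    (∑ j, (y j - 1)) ≤
      (Real.sqrt ((k : ℝ) ^ 2 + 4 * k * n ^ 2 - 4 * k * n) - k) / 2 ∧
    (Real.sqrt ((k : ℝ) ^ 2 + 4 * k * n ^ 2 - 4 * k * n) - k) / 2 <
      Real.sqrt (k : ℝ) * n ∧
    ((∀ j, x j = (Nat.choose n 2 : ℝ) / k) →
      (∑ j, (y j - 1)) =
        (Real.sqrt ((k : ℝ) ^ 2 + 4 * k * n ^ 2 - 4 * k * n) - k) / 2) := by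
  have hkR : (1 : ℝ) ≤ (k : ℝ) := by exact_mod_cast hk
  have hnR : (2 : ℝ) ≤ (n : ℝ) := by exact_mod_cast hn
  have hkpos : (0 : ℝ) < k := by linarith
  have hC : (Nat.choose n 2 : ℝ) = ((n : ℝ) ^ 2 - n) / 2 := by
    rw [Nat.cast_choose_two]; ring
  -- each y j - 1 is positive
  have hs : ∀ j, 0 < y j - 1 := by
    intro j
    obtain ⟨h1, h2⟩ := hy j
    nlinarith [hx j]
  -- sum identity
  have hsum2 : ∑ j, ((y j - 1) ^ 2 + (y j - 1)) = (n : ℝ) ^ 2 - n := by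
    have : ∀ j ∈ Finset.univ, ((y j - 1) ^ 2 + (y j - 1)) = 2 * x j := by
      intro j _
      have h2 := (hy j).2
      nlinarith [h2]
    rw [Finset.sum_congr rfl this, ← Finset.mul_sum, hsum, hC]
    ring
  set S := ∑ j, (y j - 1) with hS
  have hSpos : 0 < S := by
    apply Finset.sum_pos (fun j _ => hs j)
    exact Finset.univ_nonempty_iff.mpr ⟨⟨0, hk⟩⟩
  have hCS : S ^ 2 ≤ (k : ℝ) * ∑ j, (y j - 1) ^ 2 := by
    have h := sq_sum_le_card_mul_sum_sq (s := (Finset.univ : Finset (Fin k)))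
      (f := fun j => y j - 1)
    rw [Finset.card_univ, Fintype.card_fin] at h
    exact_mod_cast h
  have hsplit : ∑ j, (y j - 1) ^ 2 = ((n : ℝ) ^ 2 - n) - S := by
    have := Finset.sum_add_distrib (s := (Finset.univ : Finset (Fin k)))
      (f := fun j => (y j - 1) ^ 2) (g := fun j => y j - 1)
    rw [this] at hsum2
    linarith [hsum2]
  have key : S ^ 2 + (k : ℝ) * S ≤ (k : ℝ) * ((n : ℝ) ^ 2 - n) := by
    rw [hsplit] at hCS
    nlinarith
  set D := (k : ℝ) ^ 2 + 4 * k * n ^ 2 - 4 * k * n with hDdef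
  have hD : 0 ≤ D := by nlinarith
  have h1 : S ≤ (Real.sqrt D - k) / 2 := by
    have hle : 2 * S + k ≤ Real.sqrt D := by
      rw [Real.le_sqrt (by linarith) hD]
      nlinarith
    linarith
  refine ⟨h1, ?_, ?_⟩
  · -- second inequality
    have hsk : Real.sqrt (k : ℝ) ^ 2 = k := Real.sq_sqrt (by linarith)
    have hsk1 : 1 ≤ Real.sqrt (k : ℝ) := by
      nlinarith [Real.sqrt_nonneg (k : ℝ)]
    have hnpos : (0:ℝ) < (n:ℝ) := by linarith
    have hbig : D < (2 * (Real.sqrt (k : ℝ) * n) + k) ^ 2 := by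
      nlinarith [hsk, hsk1, mul_pos hkpos hnpos, Real.sqrt_nonneg (k:ℝ)]
    have hlt : Real.sqrt D < 2 * (Real.sqrt (k : ℝ) * n) + k := by
      rw [Real.sqrt_lt' (by positivity)]
      exact hbig
    linarith
  · -- equality case
    intro heq
    have j0 : Fin k := ⟨0, hk⟩
    have hyeq : ∀ j, y j = y j0 := by
      intro j
      have h2 := (hy j).2
      have h2' := (hy j0).2
      have hxeq : x j = x j0 := by rw [heq j, heq j0]
      have hz : (y j - y j0) * (y j + y j0 - 1) = 0 := by
        linear_combination 2 * h2 - 2 * h2' + 2 * hxeq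
      rcases mul_eq_zero.mp hz with h | h
      · linarith
      · have := hs j; have := hs j0; linarith
    have hSval : S = (k : ℝ) * (y j0 - 1) := by
      rw [hS]
      rw [Finset.sum_congr rfl (fun j _ => by rw [hyeq j])]
      simp [Finset.card_univ, mul_comm]
      ring
    have hx0 : y j0 * (y j0 - 1) / 2 = (Nat.choose n 2 : ℝ) / k := by
      rw [(hy j0).2, heq j0]
    have hks : (k : ℝ) * ((y j0 - 1) ^ 2 + (y j0 - 1)) = (n : ℝ) ^ 2 - n := by
      have hk0 : (k : ℝ) ≠ 0 := by positivity
      field_simp [hC] at hx0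
      nlinarith [hx0]
    have hsq : (2 * S + k) ^ 2 = D := by
      rw [hSval, hDdef]
      nlinarith [hks]
    have : Real.sqrt D = 2 * S + k := by
      rw [← hsq, Real.sqrt_sq (by linarith)]
    rw [this]; ring
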